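/- Let d > −1 with d ≠ 0, let p be a probability vector on n ≥ 2 symbols, and let j be any index. Define o^d(p_j) = inf over positive integers μ of ( μ + (1/d)·log₂( p_j^(1+d) + (1−p_j)^(1+d)·(2^μ − 1)^(−d) ) ). Then for every codeword-length vector l, R^d(p,l) ≥ o^d(p_j); in particular the optimal exponential redundancy satisfies R^d_opt(p) ≥ o^d(p_j). -/

import Mathlib

open Real Finset

/-- A valid codeword-length vector: all lengths at least 1 and the Kraft inequality holds. -/
def IsCode (n : ℕ) (l : Fin n → ℕ) : Prop :=
  (∀ i, 1 ≤ l i) ∧ ∑ i, (2 : ℝ) ^ (-(l i : ℝ)) ≤ 1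

/-- Exponential redundancy `R^d(p,l)`. -/
noncomputable def expRedundancy (n : ℕ) (d : ℝ) (p : Fin n → ℝ) (l : Fin n → ℕ) : ℝ :=
  (1 / d) * Real.logb 2 (∑ i, (p i) ^ (1 + d) * (2 : ℝ) ^ (d * (l i : ℝ)))

/-- Optimal exponential redundancy `R^d_opt(p)`. -/
noncomputable def expRedundancyOpt (n : ℕ) (d : ℝ) (p : Fin n → ℝ) : ℝ :=
  sInf { r | ∃ l : Fin n → ℕ, IsCode n l ∧ r = expRedundancy n d p l }

/-- The lower-bound function `o^d(q)`. -/
noncomputable def lowerBound (d q : ℝ) : ℝ :=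
  sInf { r | ∃ μ : ℕ, 1 ≤ μ ∧
    r = (μ : ℝ) + (1 / d) * Real.logb 2
      (q ^ (1 + d) + (1 - q) ^ (1 + d) * ((2 : ℝ) ^ (μ : ℝ) - 1) ^ (-d)) }


lemma holder_two {ι : Type*} (s : Finset ι) (A B : ι → ℝ) (hA : ∀ i ∈ s, 0 ≤ A i)
    (hB : ∀ i ∈ s, 0 ≤ B i) {t : ℝ} (ht0 : 0 < t) (ht1 : t < 1) :
    ∑ i ∈ s, (A i) ^ t * (B i) ^ (1 - t) ≤ (∑ i ∈ s, A i) ^ t * (∑ i ∈ s, B i) ^ (1 - t) := by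
  set SA := ∑ i ∈ s, A i with hSA
  set SB := ∑ i ∈ s, B i with hSB
  have hSA0 : 0 ≤ SA := Finset.sum_nonneg hA
  have hSB0 : 0 ≤ SB := Finset.sum_nonneg hB
  rcases eq_or_lt_of_le hSA0 with h | hSApos
  · have hz : ∀ i ∈ s, A i = 0 := by
      intro i hi
      exact (Finset.sum_eq_zero_iff_of_nonneg hA).1 h.symm i hi
    have : ∀ i ∈ s, A i ^ t * B i ^ (1 - t) = 0 := by
      intro i hi
      rw [hz i hi, Real.zero_rpow (ne_of_gt ht0), zero_mul]
    rw [Finset.sum_congr rfl this, Finset.sum_const, smul_zero, ← h,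
      Real.zero_rpow (ne_of_gt ht0), zero_mul]
  rcases eq_or_lt_of_le hSB0 with h | hSBpos
  · have hz : ∀ i ∈ s, B i = 0 := by
      intro i hi
      exact (Finset.sum_eq_zero_iff_of_nonneg hB).1 h.symm i hi
    have : ∀ i ∈ s, A i ^ t * B i ^ (1 - t) = 0 := by
      intro i hi
      rw [hz i hi, Real.zero_rpow (by linarith), mul_zero]
    rw [Finset.sum_congr rfl this, Finset.sum_const, smul_zero, ← h,
      Real.zero_rpow (by linarith), mul_zero]
  set C := SA ^ t * SB ^ (1 - t) with hC
  have hCpos : 0 < C := mul_pos (Real.rpow_pos_of_pos hSApos _) (Real.rpow_pos_of_pos hSBpos _)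
  have key : ∀ i ∈ s, A i ^ t * B i ^ (1 - t) ≤ C * (t * (A i / SA) + (1 - t) * (B i / SB)) := by
    intro i hi
    have hgm := Real.geom_mean_le_arith_mean2_weighted (w₁ := t) (w₂ := 1 - t) ht0.le (by linarith)
      (div_nonneg (hA i hi) hSA0) (div_nonneg (hB i hi) hSB0) (by ring)
    have heq : (A i / SA) ^ t * (B i / SB) ^ (1 - t) = (A i ^ t * B i ^ (1 - t)) / C := by
      rw [Real.div_rpow (hA i hi) hSA0, Real.div_rpow (hB i hi) hSB0, hC]
      field_simp
    rw [heq] at hgm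
    calc A i ^ t * B i ^ (1 - t) = C * ((A i ^ t * B i ^ (1 - t)) / C) := by
          field_simp
      _ ≤ C * (t * (A i / SA) + (1 - t) * (B i / SB)) :=
          mul_le_mul_of_nonneg_left hgm hCpos.le
  calc ∑ i ∈ s, A i ^ t * B i ^ (1 - t)
      ≤ ∑ i ∈ s, C * (t * (A i / SA) + (1 - t) * (B i / SB)) := Finset.sum_le_sum key
    _ = C * (t * (SA / SA) + (1 - t) * (SB / SB)) := by
        rw [← Finset.mul_sum, Finset.sum_add_distrib, ← Finset.mul_sum, ← Finset.mul_sum,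
          ← Finset.sum_div, ← Finset.sum_div]
    _ = C := by
        rw [div_self (ne_of_gt hSApos), div_self (ne_of_gt hSBpos)]; ring


lemma main_ineq (n : ℕ) (hn : 2 ≤ n) (d : ℝ) (hd : -1 < d) (hd0 : d ≠ 0)
    (p : Fin n → ℝ) (hp : ∀ i, 0 < p i) (hpsum : ∑ i, p i = 1) (j : Fin n)
    (l : Fin n → ℕ) (hl : IsCode n l) :
    ((l j : ℕ) : ℝ) + (1 / d) * Real.logb 2
      ((p j) ^ (1 + d) + (1 - p j) ^ (1 + d) * ((2 : ℝ) ^ ((l j : ℕ) : ℝ) - 1) ^ (-d))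
      ≤ expRedundancy n d p l := by
  have h2 : (1:ℝ) < 2 := one_lt_two
  set μ : ℝ := ((l j : ℕ) : ℝ) with hμdef
  have h1d : 0 < 1 + d := by linarith
  have h1d' : (1 : ℝ) + d ≠ 0 := ne_of_gt h1d
  have hμ1 : (1:ℝ) ≤ μ := by
    rw [hμdef]; exact_mod_cast hl.1 j
  have h2μpos : (0:ℝ) < (2:ℝ) ^ μ := Real.rpow_pos_of_pos (by norm_num) _
  have h2μ2 : (2:ℝ) ≤ (2:ℝ) ^ μ := by
    calc (2:ℝ) = (2:ℝ) ^ (1:ℝ) := (Real.rpow_one 2).symm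
      _ ≤ (2:ℝ) ^ μ := Real.rpow_le_rpow_of_exponent_le (by norm_num) hμ1
  have h2μ1 : (0:ℝ) < (2:ℝ) ^ μ - 1 := by linarith
  obtain ⟨k, hk⟩ : ∃ k : Fin n, k ≠ j := by
    have : 1 < Fintype.card (Fin n) := by simp; omega
    exact Fintype.exists_ne_of_one_lt_card this j
  have hne : ((univ : Finset (Fin n)).erase j).Nonempty :=
    ⟨k, Finset.mem_erase.2 ⟨hk, mem_univ k⟩⟩
  set S := ∑ i, (p i) ^ (1 + d) * (2 : ℝ) ^ (d * (l i : ℝ)) with hSdef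
  set T := ∑ i ∈ (univ : Finset (Fin n)).erase j,
    (p i) ^ (1 + d) * (2 : ℝ) ^ (d * (l i : ℝ)) with hTdef
  set K := ∑ i ∈ (univ : Finset (Fin n)).erase j, (2 : ℝ) ^ (-(l i : ℝ)) with hKdef
  have hterm : ∀ i : Fin n, 0 < (p i) ^ (1 + d) * (2 : ℝ) ^ (d * (l i : ℝ)) := fun i =>
    mul_pos (Real.rpow_pos_of_pos (hp i) _) (Real.rpow_pos_of_pos (by norm_num) _)
  have hSsplit : S = (p j) ^ (1 + d) * (2 : ℝ) ^ (d * μ) + T := by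
    rw [hSdef, hTdef, ← Finset.add_sum_erase _ _ (mem_univ j)]
  have hTpos : 0 < T := Finset.sum_pos (fun i _ => hterm i) hne
  have hSpos : 0 < S := by
    rw [hSsplit]
    have h1 := Real.rpow_pos_of_pos (hp j) (1+d)
    have h2' : (0:ℝ) < (2:ℝ) ^ (d*μ) := Real.rpow_pos_of_pos (by norm_num) _
    nlinarith [mul_pos h1 h2']
  have hKpos : 0 < K :=
    Finset.sum_pos (fun i _ => Real.rpow_pos_of_pos (by norm_num) _) hne
  have hq : ∑ i ∈ (univ : Finset (Fin n)).erase j, p i = 1 - p j := by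
    rw [Finset.sum_erase_eq_sub (mem_univ j), hpsum]
  have hqpos : 0 < 1 - p j := by
    rw [← hq]; exact Finset.sum_pos (fun i _ => hp i) hne
  have hKraft : K ≤ 1 - (2:ℝ) ^ (-μ) := by
    have h := hl.2
    rw [← Finset.add_sum_erase _ _ (mem_univ j)] at h
    rw [hKdef]; rw [hμdef]; linarith [h]
  have h2negμ : (2:ℝ) ^ (-μ) = ((2:ℝ) ^ μ)⁻¹ := Real.rpow_neg (by norm_num) μ
  have h1m : 1 - (2:ℝ) ^ (-μ) = ((2:ℝ) ^ μ - 1) * (2:ℝ) ^ (-μ) := by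
    rw [h2negμ]; field_simp
  have h2negμpos : (0:ℝ) < (2:ℝ) ^ (-μ) := Real.rpow_pos_of_pos (by norm_num) _
  have h1mpos : 0 < 1 - (2:ℝ) ^ (-μ) := by
    rw [h1m]; exact mul_pos h2μ1 h2negμpos
  have hiden : (1 - (2:ℝ) ^ (-μ)) ^ (-d) = ((2:ℝ) ^ μ - 1) ^ (-d) * (2:ℝ) ^ (d * μ) := by
    rw [h1m, Real.mul_rpow h2μ1.le h2negμpos.le,
      ← Real.rpow_mul (by norm_num : (0:ℝ) ≤ 2)]
    congr 1
    ring
  set E := (p j) ^ (1 + d) + (1 - p j) ^ (1 + d) * ((2:ℝ) ^ μ - 1) ^ (-d) with hEdef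
  have hEpos : 0 < E := by
    have h1 := Real.rpow_pos_of_pos (hp j) (1+d)
    have h2' := Real.rpow_nonneg h2μ1.le (-d)
    have h3 := Real.rpow_nonneg hqpos.le (1+d)
    nlinarith [mul_nonneg h3 h2']
  have h2dμpos : (0:ℝ) < (2:ℝ) ^ (d*μ) := Real.rpow_pos_of_pos (by norm_num) _
  have hgoal : μ + (1/d) * Real.logb 2 E ≤ (1/d) * Real.logb 2 S := by
    rcases lt_or_gt_of_ne hd0 with hdneg | hdpos
    · -- case d < 0 : Hölder with exponent t = 1 + d ∈ (0,1)
      have ht0 : 0 < 1 + d := h1d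
      have ht1 : 1 + d < 1 := by linarith
      have hold := holder_two ((univ : Finset (Fin n)).erase j) p
        (fun i => (2:ℝ) ^ (-(l i : ℝ))) (fun i _ => (hp i).le)
        (fun i _ => (Real.rpow_pos_of_pos (by norm_num) _).le) ht0 ht1
      have hterm_eq : ∀ i : Fin n,
          (p i) ^ (1+d) * ((2:ℝ) ^ (-(l i : ℝ))) ^ (1-(1+d))
            = (p i) ^ (1+d) * (2:ℝ) ^ (d * (l i : ℝ)) := by
        intro i
        rw [← Real.rpow_mul (by norm_num : (0:ℝ) ≤ 2)]
        congr 2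
        ring
      rw [Finset.sum_congr rfl (fun i _ => hterm_eq i), hq] at hold
      have hexp : (1:ℝ) - (1+d) = -d := by ring
      rw [hexp] at hold
      -- hold : T ≤ (1 - p j)^(1+d) * K^(-d)
      have hK2 : K ^ (-d) ≤ (1 - (2:ℝ) ^ (-μ)) ^ (-d) :=
        Real.rpow_le_rpow hKpos.le hKraft (by linarith)
      have hT_up : T ≤ (1 - p j) ^ (1+d) * (((2:ℝ) ^ μ - 1) ^ (-d) * (2:ℝ) ^ (d*μ)) := by
        calc T ≤ (1 - p j) ^ (1+d) * K ^ (-d) := hold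
          _ ≤ (1 - p j) ^ (1+d) * (1 - (2:ℝ) ^ (-μ)) ^ (-d) :=
              mul_le_mul_of_nonneg_left hK2 (Real.rpow_nonneg hqpos.le _)
          _ = _ := by rw [hiden]
      have hS_up : S ≤ (2:ℝ) ^ (d*μ) * E := by
        rw [hSsplit, hEdef]
        have hrg : (2:ℝ) ^ (d*μ) * ((p j) ^ (1+d) + (1 - p j) ^ (1+d) * ((2:ℝ) ^ μ - 1) ^ (-d))
            = (p j) ^ (1+d) * (2:ℝ) ^ (d*μ)
              + (1 - p j) ^ (1+d) * (((2:ℝ) ^ μ - 1) ^ (-d) * (2:ℝ) ^ (d*μ)) := by ring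
        rw [hrg]
        linarith [hT_up]
      have hlog : Real.logb 2 S ≤ d*μ + Real.logb 2 E := by
        have h1 : Real.logb 2 S ≤ Real.logb 2 ((2:ℝ) ^ (d*μ) * E) :=
          Real.logb_le_logb_of_le h2 hSpos hS_up
        rwa [Real.logb_mul (ne_of_gt h2dμpos) (ne_of_gt hEpos),
          Real.logb_rpow (by norm_num) (by norm_num)] at h1
      have hmul := mul_le_mul_of_nonpos_left hlog
        (le_of_lt (by apply one_div_neg.2 hdneg : (1:ℝ)/d < 0))
      have hrw : (1/d) * (d*μ + Real.logb 2 E) = μ + (1/d) * Real.logb 2 E := by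
        field_simp
      linarith [hmul, hrw.symm.le]
    · -- case d > 0 : Hölder with exponent t = 1/(1+d)
      have ht0 : 0 < 1/(1+d) := by positivity
      have ht1 : 1/(1+d) < 1 := by rw [div_lt_one h1d]; linarith
      have hold := holder_two ((univ : Finset (Fin n)).erase j)
        (fun i => (p i) ^ (1+d) * (2:ℝ) ^ (d * (l i : ℝ)))
        (fun i => (2:ℝ) ^ (-(l i : ℝ)))
        (fun i _ => (hterm i).le)
        (fun i _ => (Real.rpow_pos_of_pos (by norm_num) _).le) ht0 ht1
      have hterm_eq : ∀ i : Fin n,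
          ((p i) ^ (1+d) * (2:ℝ) ^ (d * (l i : ℝ))) ^ (1/(1+d))
            * ((2:ℝ) ^ (-(l i : ℝ))) ^ (1-1/(1+d)) = p i := by
        intro i
        rw [Real.mul_rpow (Real.rpow_nonneg (hp i).le _)
            (Real.rpow_nonneg (by norm_num) _),
          ← Real.rpow_mul (hp i).le, ← Real.rpow_mul (by norm_num : (0:ℝ) ≤ 2),
          ← Real.rpow_mul (by norm_num : (0:ℝ) ≤ 2), mul_assoc,
          ← Real.rpow_add (by norm_num : (0:ℝ) < 2)]
        have e1 : (1+d)*(1/(1+d)) = 1 := by field_simp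
        have e2 : d*(l i : ℝ)*(1/(1+d)) + (-(l i : ℝ))*(1-1/(1+d)) = 0 := by
          field_simp
          ring
        rw [e1, e2, Real.rpow_one, Real.rpow_zero, mul_one]
      rw [Finset.sum_congr rfl (fun i _ => hterm_eq i), hq] at hold
      -- hold : 1 - p j ≤ T ^ (1/(1+d)) * K ^ (1 - 1/(1+d))
      have hpow := Real.rpow_le_rpow hqpos.le hold h1d.le
      have hrhs : (T ^ (1/(1+d)) * K ^ (1-1/(1+d))) ^ (1+d) = T * K ^ d := by
        rw [Real.mul_rpow (Real.rpow_nonneg hTpos.le _) (Real.rpow_nonneg hKpos.le _),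
          ← Real.rpow_mul hTpos.le, ← Real.rpow_mul hKpos.le]
        have e1 : (1/(1+d))*(1+d) = 1 := by field_simp
        have e2 : (1-1/(1+d))*(1+d) = d := by field_simp; ring
        rw [e1, e2, Real.rpow_one]
      rw [hrhs] at hpow
      -- hpow : (1 - p j)^(1+d) ≤ T * K^d
      have hKd : 0 < K ^ d := Real.rpow_pos_of_pos hKpos d
      have hT_lo1 : (1 - p j) ^ (1+d) * K ^ (-d) ≤ T := by
        rw [Real.rpow_neg hKpos.le, ← div_eq_mul_inv]
        exact (div_le_iff₀ hKd).2 hpow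
      have hK2 : (1 - (2:ℝ) ^ (-μ)) ^ (-d) ≤ K ^ (-d) :=
        Real.rpow_le_rpow_of_nonpos hKpos hKraft (by linarith)
      have hT_lo : (1 - p j) ^ (1+d) * (((2:ℝ) ^ μ - 1) ^ (-d) * (2:ℝ) ^ (d*μ)) ≤ T := by
        calc (1 - p j) ^ (1+d) * (((2:ℝ) ^ μ - 1) ^ (-d) * (2:ℝ) ^ (d*μ))
            = (1 - p j) ^ (1+d) * (1 - (2:ℝ) ^ (-μ)) ^ (-d) := by rw [hiden]
          _ ≤ (1 - p j) ^ (1+d) * K ^ (-d) :=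
              mul_le_mul_of_nonneg_left hK2 (Real.rpow_nonneg hqpos.le _)
          _ ≤ T := hT_lo1
      have hS_lo : (2:ℝ) ^ (d*μ) * E ≤ S := by
        rw [hSsplit, hEdef]
        have hrg : (2:ℝ) ^ (d*μ) * ((p j) ^ (1+d) + (1 - p j) ^ (1+d) * ((2:ℝ) ^ μ - 1) ^ (-d))
            = (p j) ^ (1+d) * (2:ℝ) ^ (d*μ)
              + (1 - p j) ^ (1+d) * (((2:ℝ) ^ μ - 1) ^ (-d) * (2:ℝ) ^ (d*μ)) := by ring
        rw [hrg]
        linarith [hT_lo]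
      have hlog : d*μ + Real.logb 2 E ≤ Real.logb 2 S := by
        have h1 : Real.logb 2 ((2:ℝ) ^ (d*μ) * E) ≤ Real.logb 2 S :=
          Real.logb_le_logb_of_le h2 (mul_pos h2dμpos hEpos) hS_lo
        rwa [Real.logb_mul (ne_of_gt h2dμpos) (ne_of_gt hEpos),
          Real.logb_rpow (by norm_num) (by norm_num)] at h1
      have hmul := mul_le_mul_of_nonneg_left hlog
        (le_of_lt (by positivity : (0:ℝ) < 1/d))
      have hrw : (1/d) * (d*μ + Real.logb 2 E) = μ + (1/d) * Real.logb 2 E := by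
        field_simp
      linarith [hmul, hrw.symm.le]
  rw [expRedundancy]
  exact hgoal

lemma lb_bdd (d q : ℝ) (hd : -1 < d) (hd0 : d ≠ 0) (hq0 : 0 < q) (hq1 : q < 1) :
    BddBelow { r | ∃ μ : ℕ, 1 ≤ μ ∧
      r = (μ : ℝ) + (1 / d) * Real.logb 2
        (q ^ (1 + d) + (1 - q) ^ (1 + d) * ((2 : ℝ) ^ (μ : ℝ) - 1) ^ (-d)) } := by
  have h1d : 0 < 1 + d := by linarith
  have hq1' : 0 < 1 - q := by linarith
  have hqd : 0 < q ^ (1 + d) := Real.rpow_pos_of_pos hq0 _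
  have hq1d : 0 < (1 - q) ^ (1 + d) := Real.rpow_pos_of_pos hq1' _
  rcases lt_or_gt_of_ne hd0 with hdneg | hdpos
  · -- d < 0
    refine ⟨(1/d) * Real.logb 2 (q ^ (1+d) + (1-q) ^ (1+d)), ?_⟩
    rintro r ⟨μ, hμ, rfl⟩
    have hμ1 : (1:ℝ) ≤ (μ:ℝ) := by exact_mod_cast hμ
    have h2μpos : (0:ℝ) < (2:ℝ) ^ (μ:ℝ) := Real.rpow_pos_of_pos (by norm_num) _
    have h2μ2 : (2:ℝ) ≤ (2:ℝ) ^ (μ:ℝ) := by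
      calc (2:ℝ) = (2:ℝ) ^ (1:ℝ) := (Real.rpow_one 2).symm
        _ ≤ _ := Real.rpow_le_rpow_of_exponent_le (by norm_num) hμ1
    have h2μ1 : (0:ℝ) ≤ (2:ℝ) ^ (μ:ℝ) - 1 := by linarith
    set Eμ := q ^ (1+d) + (1-q) ^ (1+d) * ((2:ℝ) ^ (μ:ℝ) - 1) ^ (-d) with hEμ
    have hEpos : 0 < Eμ := by
      have := mul_nonneg hq1d.le (Real.rpow_nonneg h2μ1 (-d))
      rw [hEμ]; linarith
    have hbig : (1:ℝ) ≤ (2:ℝ) ^ ((-d) * (μ:ℝ)) :=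
      Real.one_le_rpow (by norm_num) (by nlinarith)
    have hbound : Eμ ≤ (q ^ (1+d) + (1-q) ^ (1+d)) * (2:ℝ) ^ ((-d) * (μ:ℝ)) := by
      have h1 : ((2:ℝ) ^ (μ:ℝ) - 1) ^ (-d) ≤ (2:ℝ) ^ ((-d) * (μ:ℝ)) := by
        have := Real.rpow_le_rpow h2μ1 (by linarith : (2:ℝ) ^ (μ:ℝ) - 1 ≤ (2:ℝ) ^ (μ:ℝ))
          (by linarith : (0:ℝ) ≤ -d)
        rwa [← Real.rpow_mul (by norm_num : (0:ℝ) ≤ 2), mul_comm] at this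
      have h2 : q ^ (1+d) ≤ q ^ (1+d) * (2:ℝ) ^ ((-d) * (μ:ℝ)) := by
        nlinarith
      have h3 : (1-q) ^ (1+d) * ((2:ℝ) ^ (μ:ℝ) - 1) ^ (-d)
          ≤ (1-q) ^ (1+d) * (2:ℝ) ^ ((-d) * (μ:ℝ)) :=
        mul_le_mul_of_nonneg_left h1 hq1d.le
      calc Eμ ≤ q ^ (1+d) * (2:ℝ) ^ ((-d) * (μ:ℝ)) + (1-q) ^ (1+d) * (2:ℝ) ^ ((-d) * (μ:ℝ)) := by
            rw [hEμ]; linarith [h2, h3]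
        _ = (q ^ (1+d) + (1-q) ^ (1+d)) * (2:ℝ) ^ ((-d) * (μ:ℝ)) := by ring
    have hCpos : 0 < q ^ (1+d) + (1-q) ^ (1+d) := by linarith
    have hlog : Real.logb 2 Eμ ≤ Real.logb 2 (q ^ (1+d) + (1-q) ^ (1+d)) + (-d) * (μ:ℝ) := by
      have h1 : Real.logb 2 Eμ
          ≤ Real.logb 2 ((q ^ (1+d) + (1-q) ^ (1+d)) * (2:ℝ) ^ ((-d) * (μ:ℝ))) :=
        Real.logb_le_logb_of_le one_lt_two hEpos hbound
      rwa [Real.logb_mul (ne_of_gt hCpos)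
          (ne_of_gt (Real.rpow_pos_of_pos (by norm_num) _)),
        Real.logb_rpow (by norm_num) (by norm_num)] at h1
    have hmul := mul_le_mul_of_nonpos_left hlog (le_of_lt (one_div_neg.2 hdneg))
    have hrw : (1/d) * (Real.logb 2 (q ^ (1+d) + (1-q) ^ (1+d)) + (-d) * (μ:ℝ))
        = (1/d) * Real.logb 2 (q ^ (1+d) + (1-q) ^ (1+d)) - (μ:ℝ) := by
      field_simp
      ring
    linarith [hmul, hrw.le]
  · -- d > 0
    refine ⟨1 + (1/d) * ((1+d) * Real.logb 2 q), ?_⟩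
    rintro r ⟨μ, hμ, rfl⟩
    have hμ1 : (1:ℝ) ≤ (μ:ℝ) := by exact_mod_cast hμ
    have h2μpos : (0:ℝ) < (2:ℝ) ^ (μ:ℝ) := Real.rpow_pos_of_pos (by norm_num) _
    have h2μ2 : (2:ℝ) ≤ (2:ℝ) ^ (μ:ℝ) := by
      calc (2:ℝ) = (2:ℝ) ^ (1:ℝ) := (Real.rpow_one 2).symm
        _ ≤ _ := Real.rpow_le_rpow_of_exponent_le (by norm_num) hμ1
    have h2μ1 : (0:ℝ) ≤ (2:ℝ) ^ (μ:ℝ) - 1 := by linarith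
    set Eμ := q ^ (1+d) + (1-q) ^ (1+d) * ((2:ℝ) ^ (μ:ℝ) - 1) ^ (-d) with hEμ
    have hElo : q ^ (1+d) ≤ Eμ := by
      have := mul_nonneg hq1d.le (Real.rpow_nonneg h2μ1 (-d))
      rw [hEμ]; linarith
    have hlog : (1+d) * Real.logb 2 q ≤ Real.logb 2 Eμ := by
      have h1 := Real.logb_le_logb_of_le one_lt_two hqd hElo
      rwa [Real.logb_rpow_eq_mul_logb_of_pos hq0] at h1
    have hmul := mul_le_mul_of_nonneg_left hlog (le_of_lt (by positivity : (0:ℝ) < 1/d))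
    linarith

lemma code_exists (n : ℕ) (hn : 2 ≤ n) : IsCode n (fun _ => n) := by
  constructor
  · intro _; show 1 ≤ n; omega
  · have hcast : ((2:ℝ) ^ (-(n:ℝ))) = ((2^n : ℕ) : ℝ)⁻¹ := by
      rw [Real.rpow_neg (by norm_num), Real.rpow_natCast]
      push_cast
      ring
    rw [Finset.sum_const, Finset.card_univ, Fintype.card_fin, hcast, nsmul_eq_mul]
    rw [mul_inv_le_iff₀ (by positivity), one_mul]
    exact_mod_cast (Nat.lt_two_pow_self (n := n)).le


theorem stmt_5 (n : ℕ) (hn : 2 ≤ n) (d : ℝ) (hd : -1 < d) (hd0 : d ≠ 0)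
    (p : Fin n → ℝ) (hp : ∀ i, 0 < p i) (hpsum : ∑ i, p i = 1) (j : Fin n) :
    (∀ l : Fin n → ℕ, IsCode n l → lowerBound d (p j) ≤ expRedundancy n d p l) ∧
    lowerBound d (p j) ≤ expRedundancyOpt n d p := by
  have hq0 : 0 < p j := hp j
  have hq1 : p j < 1 := by
    obtain ⟨k, hk⟩ : ∃ k : Fin n, k ≠ j := by
      have : 1 < Fintype.card (Fin n) := by simp; omega
      exact Fintype.exists_ne_of_one_lt_card this j
    have hne : ((univ : Finset (Fin n)).erase j).Nonempty :=
      ⟨k, Finset.mem_erase.2 ⟨hk, mem_univ k⟩⟩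
    have hpos : 0 < ∑ i ∈ (univ : Finset (Fin n)).erase j, p i :=
      Finset.sum_pos (fun i _ => hp i) hne
    have : ∑ i ∈ (univ : Finset (Fin n)).erase j, p i = 1 - p j := by
      rw [Finset.sum_erase_eq_sub (mem_univ j), hpsum]
    linarith [this ▸ hpos]
  have hbdd := lb_bdd d (p j) hd hd0 hq0 hq1
  have hmain : ∀ l : Fin n → ℕ, IsCode n l →
      lowerBound d (p j) ≤ expRedundancy n d p l := by
    intro l hl
    have hmem : ((l j : ℕ) : ℝ) + (1 / d) * Real.logb 2
        ((p j) ^ (1 + d) + (1 - p j) ^ (1 + d) * ((2 : ℝ) ^ ((l j : ℕ) : ℝ) - 1) ^ (-d))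
        ∈ { r | ∃ μ : ℕ, 1 ≤ μ ∧
          r = (μ : ℝ) + (1 / d) * Real.logb 2
            ((p j) ^ (1 + d) + (1 - p j) ^ (1 + d) * ((2 : ℝ) ^ (μ : ℝ) - 1) ^ (-d)) } :=
      ⟨l j, hl.1 j, rfl⟩
    exact le_trans (csInf_le hbdd hmem)
      (main_ineq n hn d hd hd0 p hp hpsum j l hl)
  refine ⟨hmain, ?_⟩
  apply le_csInf
  · exact ⟨expRedundancy n d p (fun _ => n), ⟨fun _ => n, code_exists n hn, rfl⟩⟩
  · rintro b ⟨l, hl, rfl⟩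
    exact hmain l hl
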